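/- If f(x,y) is an invariant function and t ∈ ℝ, then the function f₁(x,y) = f(y·{(t+x)/y}, y), where {u} denotes the fractional part of u, is also an invariant function. -/

import Mathlib

private lemma mod_helper1 (n m r : ℤ) (hr : 0 ≤ r) (hr' : r < n) :
    ((m + r) % n - m) % n = r := by
  rw [Int.sub_emod, Int.emod_emod_of_dvd _ dvd_rfl, ← Int.sub_emod,
    add_sub_cancel_left, Int.emod_eq_of_lt hr hr']

private lemma mod_helper2 (n m s : ℤ) (hs : 0 ≤ s) (hs' : s < n) :
    (m + (s - m) % n) % n = s := by
  rw [Int.add_emod, Int.emod_emod_of_dvd _ dvd_rfl, ← Int.add_emod,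
    add_sub_cancel, Int.emod_eq_of_lt hs hs']

theorem stmt_4 (f : ℝ → ℝ → ℝ)
    (hf : ∀ n : ℕ, 0 < n → ∀ x y : ℝ, 0 < y →
      ∑ r ∈ Finset.range n, f (x + r * y) (n * y) = f x y)
    (t : ℝ) (f₁ : ℝ → ℝ → ℝ)
    (hf₁ : ∀ x y : ℝ, f₁ x y = f (y * Int.fract ((t + x) / y)) y) :
    ∀ n : ℕ, 0 < n → ∀ x y : ℝ, 0 < y →
      ∑ r ∈ Finset.range n, f₁ (x + r * y) (n * y) = f₁ x y := by
  intro n hn x y hy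
  have hny : (0:ℝ) < n * y := by positivity
  have hnR : (0:ℝ) < (n:ℝ) := by exact_mod_cast hn
  have hnZ : (0:ℤ) < (n:ℤ) := by exact_mod_cast hn
  set u : ℝ := (t + x) / y with hu
  set m : ℤ := ⌊u⌋ with hm
  -- each term of the LHS
  have key : ∀ r : ℕ, r < n →
      f₁ (x + r * y) (n * y)
        = f (y * Int.fract u + (((m + r) % n).toNat : ℝ) * y) (n * y) := by
    intro r hr
    rw [hf₁]
    set s : ℤ := (m + r) % n with hs
    have hs0 : 0 ≤ s := Int.emod_nonneg _ hnZ.ne'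
    have hsn : s < n := Int.emod_lt_of_pos _ hnZ
    have h1 : (t + (x + r * y)) / (n * y) = (u + r) / n := by
      rw [hu]; field_simp; ring
    have hz := Int.mul_ediv_add_emod (m + (r : ℤ)) (n : ℤ)
    have hmr : ((m : ℝ) + r) = n * (((m + r) / n : ℤ) : ℝ) + (s : ℝ) := by
      rw [hs]; exact_mod_cast hz.symm
    have hufl : u = (m : ℝ) + Int.fract u := by
      rw [hm]; exact (Int.floor_add_fract u).symm
    have h2 : (u + r) / n = (((m + r) / n : ℤ) : ℝ) + ((s : ℝ) + Int.fract u) / n := by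
      rw [hufl]
      rw [add_right_comm, hmr]
      simp only [Int.fract_add_intCast, Int.fract_intCast_add, Int.fract_fract]
      field_simp
      ring
    have hfr01 : 0 ≤ ((s : ℝ) + Int.fract u) / n ∧ ((s : ℝ) + Int.fract u) / n < 1 := by
      constructor
      · apply div_nonneg _ hnR.le
        have := Int.fract_nonneg u
        have : (0:ℝ) ≤ (s:ℝ) := by exact_mod_cast hs0
        positivity
      · rw [div_lt_one hnR]
        have h1 : Int.fract u < 1 := Int.fract_lt_one u
        have h2 : (s : ℝ) ≤ (n : ℝ) - 1 := by
          have : s ≤ (n:ℤ) - 1 := by omega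
          exact_mod_cast this
        linarith
    have h3 : Int.fract ((u + r) / n) = ((s : ℝ) + Int.fract u) / n := by
      rw [h2, Int.fract_intCast_add, Int.fract_eq_self.mpr hfr01]
    rw [h1, h3]
    congr 1
    have hstoNat : ((s.toNat : ℕ) : ℝ) = (s : ℝ) := by exact_mod_cast Int.toNat_of_nonneg hs0
    rw [hstoNat]
    field_simp
    ring
  -- reindex the sum
  have hperm : ∑ r ∈ Finset.range n, f (y * Int.fract u + (((m + r) % n).toNat : ℝ) * y) (n * y)
      = ∑ r ∈ Finset.range n, f (y * Int.fract u + (r : ℝ) * y) (n * y) := by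
    refine Finset.sum_nbij' (fun r => ((m + r) % n).toNat)
      (fun s => ((s - m) % n).toNat) ?_ ?_ ?_ ?_ ?_
    · intro a ha
      simp only [Finset.mem_range] at ha ⊢
      have : (m + a) % n < n := Int.emod_lt_of_pos _ hnZ
      omega
    · intro a ha
      simp only [Finset.mem_range] at ha ⊢
      have : ((a : ℤ) - m) % n < n := Int.emod_lt_of_pos _ hnZ
      omega
    · intro a ha
      simp only [Finset.mem_range] at ha
      have h0 : 0 ≤ (m + a) % n := Int.emod_nonneg _ hnZ.ne'
      have := mod_helper1 n m a (by omega) (by exact_mod_cast ha)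
      have heq : ((((m + (a:ℤ)) % n).toNat : ℤ) - m) % n = a := by
        rw [Int.toNat_of_nonneg h0]; exact this
      beta_reduce
      omega
    · intro a ha
      simp only [Finset.mem_range] at ha
      have h0 : 0 ≤ ((a:ℤ) - m) % n := Int.emod_nonneg _ hnZ.ne'
      have := mod_helper2 n m a (by omega) (by exact_mod_cast ha)
      have heq : (m + ((((a:ℤ) - m) % n).toNat : ℤ)) % n = a := by
        rw [Int.toNat_of_nonneg h0]; exact this
      beta_reduce
      omega
    · intro a ha
      rfl
  calc ∑ r ∈ Finset.range n, f₁ (x + r * y) (n * y)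
      = ∑ r ∈ Finset.range n, f (y * Int.fract u + (((m + r) % n).toNat : ℝ) * y) (n * y) := by
        apply Finset.sum_congr rfl
        intro r hr
        exact key r (Finset.mem_range.mp hr)
    _ = ∑ r ∈ Finset.range n, f (y * Int.fract u + (r : ℝ) * y) (n * y) := hperm
    _ = f (y * Int.fract u) y := hf n hn _ y hy
    _ = f₁ x y := (hf₁ x y).symm
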